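/- Let 1 ≤ θ₁ ≤ θ₂ be such that Q_n(θ₁) > 0 for all n, and define M_n(θ) := ∑_{j=0}^n (1/(p_j(θ) π_j(θ))) ∑_{k=0}^j r_k(θ) π_k(θ), where p_j(θ) = (Q_{j+1}(θ)/Q_j(θ)) p_j/θ, r_j(θ) = r_j/θ, q_{j+1}(θ) = (Q_j(θ)/Q_{j+1}(θ)) q_{j+1}/θ and π_n(θ) = π_n Q_n(θ)^2. Then M_n(θ₁) ≥ M_n(θ₂) for every n ≥ 0. -/

import Mathlib

open Finset Filter

theorem stmt17 (p q r : ℕ → ℝ) (Q : ℕ → ℝ → ℝ)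
    (hp : ∀ j, 0 < p j) (hq : ∀ j, 0 < q (j + 1)) (hr : ∀ j, 0 ≤ r j)
    (hq0 : q 0 = 0) (hs : ∀ j, p j + q j + r j = 1)
    (hQ0 : ∀ x : ℝ, Q 0 x = 1) (hQ1 : ∀ x : ℝ, p 0 * Q 1 x = x - r 0)
    (hQrec : ∀ n : ℕ, ∀ x : ℝ, x * Q (n + 1) x =
      q (n + 1) * Q n x + r (n + 1) * Q (n + 1) x + p (n + 1) * Q (n + 2) x)
    (π : ℕ → ℝ) (hπ0 : π 0 = 1) (hπ : ∀ n, π (n + 1) = π n * (p n / q (n + 1)))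
    (θ₁ θ₂ : ℝ) (h1 : 1 ≤ θ₁) (h12 : θ₁ ≤ θ₂) (hQθ₁ : ∀ n, 0 < Q n θ₁) :
    ∀ n : ℕ,
      ∑ j ∈ Finset.range (n + 1),
          (1 / ((Q (j + 1) θ₁ / Q j θ₁ * p j / θ₁) * (π j * (Q j θ₁) ^ 2))) *
            ∑ k ∈ Finset.range (j + 1), (r k / θ₁) * (π k * (Q k θ₁) ^ 2) ≥
        ∑ j ∈ Finset.range (n + 1),
          (1 / ((Q (j + 1) θ₂ / Q j θ₂ * p j / θ₂) * (π j * (Q j θ₂) ^ 2))) *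
            ∑ k ∈ Finset.range (j + 1), (r k / θ₂) * (π k * (Q k θ₂) ^ 2) := by
  -- positivity of π
  have hπpos : ∀ n, 0 < π n := by
    intro n
    induction n with
    | zero => rw [hπ0]; norm_num
    | succ n ih => rw [hπ n]; exact mul_pos ih (div_pos (hp n) (hq n))
  have h2 : (1:ℝ) ≤ θ₂ := le_trans h1 h12
  -- key telescoping identity
  have L1 : ∀ x : ℝ, ∀ n : ℕ, p n * π n * (Q (n + 1) x - Q n x)
      = (x - 1) * ∑ k ∈ Finset.range (n + 1), π k * Q k x := by
    intro x n
    induction n with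
    | zero =>
      simp only [Finset.sum_range_one, hQ0, hπ0, zero_add]
      linear_combination hQ1 x - hs 0 + hq0
    | succ n ih =>
      rw [Finset.sum_range_succ]
      have hπq : q (n + 1) * π (n + 1) = p n * π n := by
        have hqne : q (n + 1) ≠ 0 := (hq n).ne'
        rw [hπ n]; field_simp
      have hrec := hQrec n x
      have hsn := hs (n + 1)
      linear_combination (-π (n + 1)) * hrec + ih + (Q (n + 1) x - Q n x) * hπq -
        π (n + 1) * Q (n + 1) x * hsn
  -- positivity of Q at any x ≥ 1
  have key : ∀ x : ℝ, 1 ≤ x → ∀ n, ∀ k ≤ n, 1 ≤ Q k x := by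
    intro x hx n
    induction n with
    | zero => intro k hk; interval_cases k; rw [hQ0]
    | succ n ih =>
      intro k hk
      rcases Nat.lt_succ_iff_lt_or_eq.mp (Nat.lt_succ_of_le hk) with h | h
      · exact ih k (Nat.lt_succ_iff.mp h)
      · subst h
        have hmono : Q n x ≤ Q (n + 1) x := by
          have hsum : 0 ≤ ∑ k ∈ Finset.range (n + 1), π k * Q k x := by
            apply Finset.sum_nonneg
            intro i hi
            have : 1 ≤ Q i x := ih i (Nat.lt_succ_iff.mp (Finset.mem_range.mp hi))
            nlinarith [hπpos i]
          nlinarith [L1 x n, hp n, hπpos n, mul_pos (hp n) (hπpos n)]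
        exact le_trans (ih n le_rfl) hmono
  have hQ2pos : ∀ n, 0 < Q n θ₂ := fun n => lt_of_lt_of_le one_pos (key θ₂ h2 n n le_rfl)
  -- ratio recurrence
  have hRrec : ∀ θ : ℝ, (∀ n, 0 < Q n θ) → ∀ n,
      Q (n + 2) θ / Q (n + 1) θ
        = (θ - r (n + 1) - q (n + 1) * (Q n θ / Q (n + 1) θ)) / p (n + 1) := by
    intro θ hQpos n
    have h1' : Q (n + 1) θ ≠ 0 := (hQpos (n + 1)).ne'
    have hp' : p (n + 1) ≠ 0 := (hp (n + 1)).ne'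
    field_simp
    linear_combination (-1 : ℝ) * (hQrec n θ)
  -- ratio monotonicity in θ
  have L3 : ∀ n, Q (n + 1) θ₁ / Q n θ₁ ≤ Q (n + 1) θ₂ / Q n θ₂ := by
    intro n
    induction n with
    | zero =>
      rw [hQ0, hQ0, div_one, div_one]
      have e1 := hQ1 θ₁
      have e2 := hQ1 θ₂
      have := hp 0
      nlinarith
    | succ n ih =>
      rw [hRrec θ₁ hQθ₁ n, hRrec θ₂ hQ2pos n]
      have hinv : Q n θ₂ / Q (n + 1) θ₂ ≤ Q n θ₁ / Q (n + 1) θ₁ := by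
        have h1p : 0 < Q (n + 1) θ₁ / Q n θ₁ := div_pos (hQθ₁ (n + 1)) (hQθ₁ n)
        have := one_div_le_one_div_of_le h1p ih
        rwa [one_div_div, one_div_div] at this
      have hqn := (hq n).le
      have hnum : θ₁ - r (n + 1) - q (n + 1) * (Q n θ₁ / Q (n + 1) θ₁)
          ≤ θ₂ - r (n + 1) - q (n + 1) * (Q n θ₂ / Q (n + 1) θ₂) := by
        linarith [mul_le_mul_of_nonneg_left hinv hqn]
      exact (div_le_div_iff_of_pos_right (hp (n + 1))).mpr hnum
  -- ratio Q k / Q j decreasing in θ, for k ≤ j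
  have L4 : ∀ k d : ℕ, Q k θ₂ / Q (k + d) θ₂ ≤ Q k θ₁ / Q (k + d) θ₁ := by
    intro k d
    induction d with
    | zero =>
      simp only [Nat.add_zero]
      rw [div_self (hQθ₁ k).ne', div_self (hQ2pos k).ne']
    | succ d ih =>
      have e1 : Q k θ₁ / Q (k + (d + 1)) θ₁
          = (Q k θ₁ / Q (k + d) θ₁) * (Q (k + d) θ₁ / Q (k + d + 1) θ₁) := by
        have hb : Q (k + d) θ₁ ≠ 0 := (hQθ₁ (k + d)).ne'
        have hc : Q (k + d + 1) θ₁ ≠ 0 := (hQθ₁ (k + d + 1)).ne'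
        rw [show k + (d + 1) = k + d + 1 from rfl]
        field_simp
      have e2 : Q k θ₂ / Q (k + (d + 1)) θ₂
          = (Q k θ₂ / Q (k + d) θ₂) * (Q (k + d) θ₂ / Q (k + d + 1) θ₂) := by
        have hb : Q (k + d) θ₂ ≠ 0 := (hQ2pos (k + d)).ne'
        have hc : Q (k + d + 1) θ₂ ≠ 0 := (hQ2pos (k + d + 1)).ne'
        rw [show k + (d + 1) = k + d + 1 from rfl]
        field_simp
      rw [e1, e2]
      have hinv : Q (k + d) θ₂ / Q (k + d + 1) θ₂ ≤ Q (k + d) θ₁ / Q (k + d + 1) θ₁ := by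
        have h1p : 0 < Q (k + d + 1) θ₁ / Q (k + d) θ₁ :=
          div_pos (hQθ₁ (k + d + 1)) (hQθ₁ (k + d))
        have := one_div_le_one_div_of_le h1p (L3 (k + d))
        rwa [one_div_div, one_div_div] at this
      apply mul_le_mul ih hinv
      · exact le_of_lt (div_pos (hQ2pos (k + d)) (hQ2pos (k + d + 1)))
      · exact le_of_lt (div_pos (hQθ₁ k) (hQθ₁ (k + d)))
  have L4' : ∀ k j : ℕ, k ≤ j → Q k θ₂ / Q j θ₂ ≤ Q k θ₁ / Q j θ₁ := by
    intro k j hkj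
    obtain ⟨d, rfl⟩ := Nat.le.dest hkj
    exact L4 k d
  -- term identity
  have hterm : ∀ θ : ℝ, 0 < θ → (∀ n, 0 < Q n θ) → ∀ j,
      (1 / ((Q (j + 1) θ / Q j θ * p j / θ) * (π j * (Q j θ) ^ 2))) *
        ∑ k ∈ Finset.range (j + 1), (r k / θ) * (π k * (Q k θ) ^ 2)
      = ∑ k ∈ Finset.range (j + 1),
          (r k * π k / (p j * π j)) * ((Q k θ / Q j θ) * (Q k θ / Q (j + 1) θ)) := by
    intro θ hθ hQpos j
    rw [Finset.mul_sum]
    apply Finset.sum_congr rfl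
    intro k _
    have h1' : Q j θ ≠ 0 := (hQpos j).ne'
    have h2' : Q (j + 1) θ ≠ 0 := (hQpos (j + 1)).ne'
    have h3' : θ ≠ 0 := hθ.ne'
    have h4' : p j ≠ 0 := (hp j).ne'
    have h5' : π j ≠ 0 := (hπpos j).ne'
    field_simp
  -- main estimate
  intro n
  rw [ge_iff_le]
  apply Finset.sum_le_sum
  intro j _
  rw [hterm θ₁ (lt_of_lt_of_le one_pos h1) hQθ₁ j,
      hterm θ₂ (lt_of_lt_of_le one_pos h2) hQ2pos j]
  apply Finset.sum_le_sum
  intro k hk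
  have hkj : k ≤ j := Nat.lt_succ_iff.mp (Finset.mem_range.mp hk)
  have hc : 0 ≤ r k * π k / (p j * π j) :=
    div_nonneg (mul_nonneg (hr k) (hπpos k).le) (mul_pos (hp j) (hπpos j)).le
  apply mul_le_mul_of_nonneg_left ?_ hc
  apply mul_le_mul (L4' k j hkj) (L4' k (j + 1) (Nat.le_succ_of_le hkj))
  · exact le_of_lt (div_pos (hQ2pos k) (hQ2pos (j + 1)))
  · exact le_of_lt (div_pos (hQθ₁ k) (hQθ₁ j))
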